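/- Let L be a symmetric PSD n×n matrix with kernel spanned by the all-ones vector (a normalized Laplacian of a connected regular multigraph), L̃⁺ a symmetric matrix with L̃⁺ ≈_ε L⁺, ε ≤ ln 2, and b ∈ im(L). Then x̃ = L̃⁺b satisfies ‖x* − x̃‖_L² ≤ 2ε·‖x*‖_L², where x* = L⁺b and ‖v‖_L = √(vᵀLv). -/

import Mathlib

open Matrix
open scoped MatrixOrder

set_option linter.unusedVariables false


-- symmetric (real) transpose symmetry move
private lemma dot_sym {n : ℕ} {M : Matrix (Fin n) (Fin n) ℝ} (hM : Mᵀ = M)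
    (u v : Fin n → ℝ) : (M *ᵥ u) ⬝ᵥ v = u ⬝ᵥ (M *ᵥ v) := by
  rw [dotProduct_mulVec u M v, ← mulVec_transpose, hM, dotProduct_comm]

private lemma herm_of_symm {n : ℕ} {M : Matrix (Fin n) (Fin n) ℝ} (hM : Mᵀ = M) :
    M.IsHermitian := by
  unfold Matrix.IsHermitian
  ext i j
  simp [conjTranspose_apply]
  exact congrFun (congrFun hM i) j

/-- If `-c•I ⪯ C ⪯ c•I` (as quadratic forms) for symmetric `C`, then `‖Cy‖² ≤ c²‖y‖²`. -/
private lemma op_bound {n : ℕ} {C : Matrix (Fin n) (Fin n) ℝ} {c : ℝ}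
    (hC : Cᵀ = C) (hc : 0 ≤ c)
    (h1 : ∀ x, x ⬝ᵥ (C *ᵥ x) ≤ c * (x ⬝ᵥ x))
    (h2 : ∀ x, -(c * (x ⬝ᵥ x)) ≤ x ⬝ᵥ (C *ᵥ x)) (y : Fin n → ℝ) :
    (C *ᵥ y) ⬝ᵥ (C *ᵥ y) ≤ c ^ 2 * (y ⬝ᵥ y) := by
  set B : Matrix (Fin n) (Fin n) ℝ := c • (1 : Matrix (Fin n) (Fin n) ℝ) + C with hBdef
  have hBt : Bᵀ = B := by
    rw [hBdef, transpose_add, transpose_smul, transpose_one, hC]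
  have hB : B.PosSemidef := by
    refine PosSemidef.of_dotProduct_mulVec_nonneg (herm_of_symm hBt) fun x => ?_
    have := h2 x
    simp only [star_trivial, hBdef, add_mulVec, smul_mulVec, one_mulVec,
      dotProduct_add, dotProduct_smul, smul_eq_mul]
    linarith
  set s := CFC.sqrt B with hsdef
  have hss : s * s = B := CFC.sqrt_mul_sqrt_self B hB.nonneg
  have hst : sᵀ = s := by
    have := (CFC.sqrt_nonneg B).posSemidef.1
    unfold Matrix.IsHermitian at this
    ext i j
    have := congrFun (congrFun this i) j
    simpa [conjTranspose_apply] using this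
  -- key: ⟨By, By⟩ ≤ 2c ⟨y, By⟩
  have key : (B *ᵥ y) ⬝ᵥ (B *ᵥ y) ≤ 2 * c * (y ⬝ᵥ (B *ᵥ y)) := by
    have e1 : (B *ᵥ y) ⬝ᵥ (B *ᵥ y) = (s *ᵥ y) ⬝ᵥ (B *ᵥ (s *ᵥ y)) := by
      rw [dot_sym hBt]
      conv_lhs => rw [← hss]
      rw [← mulVec_mulVec, ← mulVec_mulVec y s s, ← dot_sym hst, ← hss, ← mulVec_mulVec]
    have e2 : (s *ᵥ y) ⬝ᵥ (s *ᵥ y) = y ⬝ᵥ (B *ᵥ y) := by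
      rw [dot_sym hst, mulVec_mulVec, hss]
    have h3 := h1 (s *ᵥ y)
    have hBz : ∀ z, B *ᵥ z = c • z + C *ᵥ z := fun z => by
      simp [hBdef, add_mulVec, smul_mulVec, one_mulVec]
    have h4 : (s *ᵥ y) ⬝ᵥ (B *ᵥ (s *ᵥ y)) =
        c * ((s *ᵥ y) ⬝ᵥ (s *ᵥ y)) + (s *ᵥ y) ⬝ᵥ (C *ᵥ (s *ᵥ y)) := by
      rw [hBz]; simp [dotProduct_add]
    rw [e1, h4]
    rw [e2] at h3 ⊢
    linarith
  -- expand ⟨Cy, Cy⟩ with C = B - c•I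
  have hCy : C *ᵥ y = B *ᵥ y - c • y := by
    simp [hBdef, add_mulVec, smul_mulVec, one_mulVec]
  have expand : (C *ᵥ y) ⬝ᵥ (C *ᵥ y) =
      (B *ᵥ y) ⬝ᵥ (B *ᵥ y) - 2 * c * (y ⬝ᵥ (B *ᵥ y)) + c ^ 2 * (y ⬝ᵥ y) := by
    rw [hCy]
    have hsymB : (B *ᵥ y) ⬝ᵥ y = y ⬝ᵥ (B *ᵥ y) := dot_sym hBt y y
    simp only [dotProduct_sub, sub_dotProduct, dotProduct_smul, smul_dotProduct,
      smul_eq_mul, hsymB]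
    ring
  rw [expand]
  linarith

private lemma scalar_ineq {ε : ℝ} (hε0 : 0 ≤ ε) (hεle : ε ≤ Real.log 2) :
    (Real.exp ε - 1) ^ 2 ≤ 2 * ε := by
  have hlog2 : (0:ℝ) < Real.log 2 := Real.log_pos (by norm_num)
  have hlog2half : (1:ℝ)/2 ≤ Real.log 2 := by
    have := Real.log_two_gt_d9
    linarith
  have hexple2 : Real.exp ε ≤ 2 := by
    calc Real.exp ε ≤ Real.exp (Real.log 2) := Real.exp_le_exp.mpr hεle
    _ = 2 := Real.exp_log (by norm_num)
  have hconv : Real.exp ε ≤ 1 + ε / Real.log 2 := by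
    have ha : (0:ℝ) ≤ 1 - ε / Real.log 2 := by
      rw [sub_nonneg, div_le_one hlog2]; exact hεle
    have hb : (0:ℝ) ≤ ε / Real.log 2 := div_nonneg hε0 hlog2.le
    have hab : (1 - ε / Real.log 2) + ε / Real.log 2 = 1 := by ring
    have h := convexOn_exp.2 (Set.mem_univ (0:ℝ)) (Set.mem_univ (Real.log 2)) ha hb hab
    simp only [smul_eq_mul, mul_zero, zero_add, Real.exp_zero, mul_one,
      Real.exp_log (show (0:ℝ) < 2 by norm_num)] at h
    rw [div_mul_cancel₀ _ hlog2.ne'] at h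
    linarith
  have h2ε : Real.exp ε - 1 ≤ 2 * ε := by
    have : ε / Real.log 2 ≤ 2 * ε := by
      rw [div_le_iff₀ hlog2]
      nlinarith
    linarith
  have hge : ε + 1 ≤ Real.exp ε := Real.add_one_le_exp ε
  nlinarith

private lemma symm_of_herm {n : ℕ} {M : Matrix (Fin n) (Fin n) ℝ} (h : M.IsHermitian) :
    Mᵀ = M := by
  ext i j
  rw [transpose_apply]
  conv_rhs => rw [← h]
  simp [conjTranspose_apply]

private lemma psd_form {n : ℕ} {M : Matrix (Fin n) (Fin n) ℝ} (h : M.PosSemidef)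
    (x : Fin n → ℝ) : 0 ≤ x ⬝ᵥ (M *ᵥ x) := by
  simpa using h.dotProduct_mulVec_nonneg x

/-- An ε-approximate pseudoinverse yields a √(2ε)-approximate solution: if
L̃⁺ ≈_ε L⁺ with ε ≤ ln 2 and b ∈ im(L), then x̃ = L̃⁺b satisfies
‖x* − x̃‖_L² ≤ 2ε·‖x*‖_L², where x* = L⁺b and ‖v‖_L² = vᵀLv. -/
theorem approx_pseudoinverse_solution {n : ℕ} (L Lp Lt : Matrix (Fin n) (Fin n) ℝ) (ε : ℝ)
    (hL : L.PosSemidef)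
    (hker : ∀ v : Fin n → ℝ, L *ᵥ v = 0 ↔ ∃ c : ℝ, v = fun _ => c)
    -- Lp is the Moore–Penrose pseudoinverse of L
    (hp1 : L * Lp * L = L) (hp2 : Lp * L * Lp = Lp)
    (hp3 : (Lp * L)ᵀ = Lp * L) (hp4 : (L * Lp)ᵀ = L * Lp)
    -- L̃⁺ is symmetric PSD with the same kernel as L
    (hLt : Lt.PosSemidef) (hkert : ∀ v : Fin n → ℝ, Lt *ᵥ v = 0 ↔ L *ᵥ v = 0)
    (hε0 : 0 ≤ ε) (hεle : ε ≤ Real.log 2)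
    -- L̃⁺ ≈_ε L⁺
    (happ1 : (Lp - Real.exp (-ε) • Lt).PosSemidef)
    (happ2 : (Real.exp ε • Lt - Lp).PosSemidef)
    (b : Fin n → ℝ) (hb : ∃ x : Fin n → ℝ, L *ᵥ x = b) :
    (Lp *ᵥ b - Lt *ᵥ b) ⬝ᵥ (L *ᵥ (Lp *ᵥ b - Lt *ᵥ b)) ≤
      2 * ε * ((Lp *ᵥ b) ⬝ᵥ (L *ᵥ (Lp *ᵥ b))) := by
  obtain ⟨x, hx⟩ := hb
  subst hx
  set u : ℝ := Real.exp ε with hudef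
  have hu : 0 < u := Real.exp_pos ε
  have hu1 : 1 ≤ u := Real.one_le_exp hε0
  have huinv : Real.exp (-ε) = u⁻¹ := by rw [Real.exp_neg]
  have huu : u * u⁻¹ = 1 := mul_inv_cancel₀ hu.ne'
  -- symmetry facts
  have hLsym : Lᵀ = L := symm_of_herm hL.1
  have hLtsym : Ltᵀ = Lt := symm_of_herm hLt.1
  have hLpsym : Lpᵀ = Lp := by
    have h' := symm_of_herm happ1.1
    rw [transpose_sub, transpose_smul, hLtsym] at h'
    exact sub_left_inj.mp h'
  -- square root of L
  set S := CFC.sqrt L with hSdef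
  have hSS : S * S = L := CFC.sqrt_mul_sqrt_self L hL.nonneg
  have hSsym : Sᵀ = S := symm_of_herm (CFC.sqrt_nonneg L).posSemidef.1
  have hLv : ∀ w, S *ᵥ (S *ᵥ w) = L *ᵥ w := fun w => by rw [mulVec_mulVec, hSS]
  have hp2v : ∀ w, Lp *ᵥ (L *ᵥ (Lp *ᵥ w)) = Lp *ᵥ w := fun w => by
    rw [mulVec_mulVec, mulVec_mulVec, hp2]
  have hp1v : ∀ w, L *ᵥ (Lp *ᵥ (L *ᵥ w)) = L *ᵥ w := fun w => by
    rw [mulVec_mulVec, mulVec_mulVec, hp1]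
  -- projection bound : ⟨Sz, Lp Sz⟩ ≤ ⟨z, z⟩
  have hProj : ∀ z, (S *ᵥ z) ⬝ᵥ (Lp *ᵥ (S *ᵥ z)) ≤ z ⬝ᵥ z := by
    intro z
    have hzp : (S *ᵥ z) ⬝ᵥ (Lp *ᵥ (S *ᵥ z)) = z ⬝ᵥ (S *ᵥ (Lp *ᵥ (S *ᵥ z))) :=
      dot_sym hSsym z _
    have hpp : (S *ᵥ (Lp *ᵥ (S *ᵥ z))) ⬝ᵥ (S *ᵥ (Lp *ᵥ (S *ᵥ z)))
        = (S *ᵥ z) ⬝ᵥ (Lp *ᵥ (S *ᵥ z)) := by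
      rw [dot_sym hSsym, hLv, dot_sym hLpsym, hp2v]
    have hq : 0 ≤ (z - S *ᵥ (Lp *ᵥ (S *ᵥ z))) ⬝ᵥ (z - S *ᵥ (Lp *ᵥ (S *ᵥ z))) :=
      Finset.sum_nonneg fun i _ => mul_self_nonneg _
    have hexp : (z - S *ᵥ (Lp *ᵥ (S *ᵥ z))) ⬝ᵥ (z - S *ᵥ (Lp *ᵥ (S *ᵥ z)))
        = z ⬝ᵥ z - 2 * (z ⬝ᵥ (S *ᵥ (Lp *ᵥ (S *ᵥ z))))
          + (S *ᵥ (Lp *ᵥ (S *ᵥ z))) ⬝ᵥ (S *ᵥ (Lp *ᵥ (S *ᵥ z))) := by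
      simp only [dotProduct_sub, sub_dotProduct]
      rw [dotProduct_comm (S *ᵥ (Lp *ᵥ (S *ᵥ z))) z]
      ring
    rw [hzp]
    rw [hzp] at hpp
    linarith
  -- the conjugated matrix C and its quadratic-form bounds
  set C : Matrix (Fin n) (Fin n) ℝ := S * (Lp - Lt) * S with hCdef
  have hCsym : Cᵀ = C := by
    rw [hCdef, transpose_mul, transpose_mul, transpose_sub, hSsym, hLpsym, hLtsym,
      Matrix.mul_assoc]
  have hCv : ∀ z, C *ᵥ z = S *ᵥ ((Lp - Lt) *ᵥ (S *ᵥ z)) := fun z => by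
    rw [hCdef, ← mulVec_mulVec, ← mulVec_mulVec]
  have hform : ∀ z, z ⬝ᵥ (C *ᵥ z) =
      (S *ᵥ z) ⬝ᵥ (Lp *ᵥ (S *ᵥ z)) - (S *ᵥ z) ⬝ᵥ (Lt *ᵥ (S *ᵥ z)) := by
    intro z
    rw [hCv, ← dot_sym hSsym, sub_mulVec, dotProduct_sub]
  have hbounds : ∀ z, z ⬝ᵥ (C *ᵥ z) ≤ (u - 1) * (z ⬝ᵥ z) ∧
      -((u - 1) * (z ⬝ᵥ z)) ≤ z ⬝ᵥ (C *ᵥ z) := by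
    intro z
    have e1 : 0 ≤ (S *ᵥ z) ⬝ᵥ (Lp *ᵥ (S *ᵥ z)) - u⁻¹ * ((S *ᵥ z) ⬝ᵥ (Lt *ᵥ (S *ᵥ z))) := by
      have h := psd_form happ1 (S *ᵥ z)
      rw [sub_mulVec, dotProduct_sub, smul_mulVec, dotProduct_smul, huinv] at h
      simpa using h
    have e2 : 0 ≤ u * ((S *ᵥ z) ⬝ᵥ (Lt *ᵥ (S *ᵥ z))) - (S *ᵥ z) ⬝ᵥ (Lp *ᵥ (S *ᵥ z)) := by
      have h := psd_form happ2 (S *ᵥ z)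
      rw [sub_mulVec, dotProduct_sub, smul_mulVec, dotProduct_smul] at h
      simpa using h
    have ht : 0 ≤ (S *ᵥ z) ⬝ᵥ (Lt *ᵥ (S *ᵥ z)) := psd_form hLt (S *ᵥ z)
    have ha : 0 ≤ (S *ᵥ z) ⬝ᵥ (Lp *ᵥ (S *ᵥ z)) := by nlinarith
    have hpr : (S *ᵥ z) ⬝ᵥ (Lp *ᵥ (S *ᵥ z)) ≤ z ⬝ᵥ z := hProj z
    have hf := hform z
    constructor
    · rw [hf]
      nlinarith [sq_nonneg (u - 1), mul_le_mul_of_nonneg_left hpr (sub_nonneg.mpr hu1)]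
    · rw [hf]
      nlinarith [mul_le_mul_of_nonneg_left hpr (sub_nonneg.mpr hu1)]
  -- apply the operator bound
  have hop := op_bound hCsym (by linarith : (0:ℝ) ≤ u - 1)
    (fun z => (hbounds z).1) (fun z => (hbounds z).2) (S *ᵥ x)
  -- identify ⟨C y, C y⟩ with the LHS
  have hCy : C *ᵥ (S *ᵥ x) = S *ᵥ ((Lp - Lt) *ᵥ (L *ᵥ x)) := by
    rw [hCv, hLv]
  have hLHS : (Lp *ᵥ (L *ᵥ x) - Lt *ᵥ (L *ᵥ x)) ⬝ᵥ (L *ᵥ (Lp *ᵥ (L *ᵥ x) - Lt *ᵥ (L *ᵥ x)))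
      = (C *ᵥ (S *ᵥ x)) ⬝ᵥ (C *ᵥ (S *ᵥ x)) := by
    rw [hCy, ← sub_mulVec]
    set d := (Lp - Lt) *ᵥ (L *ᵥ x) with hddef
    rw [← hLv d, ← dot_sym hSsym]
  have hyy : (S *ᵥ x) ⬝ᵥ (S *ᵥ x) = x ⬝ᵥ (L *ᵥ x) := by
    rw [dot_sym hSsym, hLv]
  have hRHS : (Lp *ᵥ (L *ᵥ x)) ⬝ᵥ (L *ᵥ (Lp *ᵥ (L *ᵥ x))) = x ⬝ᵥ (L *ᵥ x) := by
    rw [hp1v, ← dot_sym hLsym, hp1v, dotProduct_comm]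
  rw [hLHS, hRHS]
  rw [hyy] at hop
  have hT : 0 ≤ x ⬝ᵥ (L *ᵥ x) := psd_form hL x
  have hsc : (u - 1) ^ 2 ≤ 2 * ε := scalar_ineq hε0 hεle
  calc (C *ᵥ (S *ᵥ x)) ⬝ᵥ (C *ᵥ (S *ᵥ x)) ≤ (u - 1) ^ 2 * (x ⬝ᵥ (L *ᵥ x)) := hop
  _ ≤ 2 * ε * (x ⬝ᵥ (L *ᵥ x)) := mul_le_mul_of_nonneg_right hsc hT
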